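/- For every N ≥ 2 there is a (necessarily unique) group homomorphism ρ^{m|n}_N: VB_N → GL(V^{⊗N}) sending each generator σ_i to the automorphism that acts by Ř on the i-th and (i+1)-st tensor factors and by the identity on all other factors, and each generator χ_i to the automorphism that acts by τ on the i-th and (i+1)-st tensor factors and by the identity on all other factors. (The virtual U_q(gl(m|n)) Reshetikhin–Turaev functor restricted to virtual braids is a representation of the virtual braid group.) -/

import Mathlib

/-!
STATEMENT 8: for every N ≥ 2 (written N = M + 2 below) there is a unique group homomorphism
ρ^{m|n}_N : VB_N → GL(V^{⊗N}) sending σ_i to the automorphism acting by Ř on the i-th and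
(i+1)-st tensor factors and by the identity elsewhere, and χ_i to the automorphism acting by τ
on those factors. Automorphisms of V^{⊗N} are represented as units of the matrix ring in the
basis of pure tensors, indexed by functions Fin N → Fin (m+n).
-/

noncomputable section

/-- The field `ℂ(q)` of rational functions in one variable over `ℂ`. -/
abbrev Kq : Type := RatFunc ℂ

/-- The variable `q ∈ ℂ(q)`. -/
def q : Kq := RatFunc.X

/-- The sign `(−1)^{|i||j|}`, where `|i| = 0` for the first `m` basis vectors and `|i| = 1`
for the last `n` (0-based indexing: the paper's `i ≤ m` becomes `(i : ℕ) < m`). -/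
def sgn (m n : ℕ) (i j : Fin (m + n)) : Kq :=
  if m ≤ (i : ℕ) ∧ m ≤ (j : ℕ) then -1 else 1

/-- The R-matrix `Ř` of the vector representation of `U_q(gl(m|n))` on `V ⊗ V`
(rows = output indices, columns = input indices):
`Ř(x_i ⊗ x_j) = q·x_i ⊗ x_i` if `i = j ≤ m`;
`= (−1)^{|i||j|} x_j ⊗ x_i + (q − q⁻¹) x_i ⊗ x_j` if `i < j`;
`= (−1)^{|i||j|} x_j ⊗ x_i` if `i > j`; `= −q⁻¹·x_i ⊗ x_i` if `i = j > m`. -/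
def Rhat (m n : ℕ) :
    Matrix (Fin (m + n) × Fin (m + n)) (Fin (m + n) × Fin (m + n)) Kq :=
  fun a x =>
    if x.1 = x.2 then
      if a = x then (if (x.1 : ℕ) < m then q else -q⁻¹) else 0
    else if (x.1 : ℕ) < (x.2 : ℕ) then
      (if a = (x.2, x.1) then sgn m n x.1 x.2 else 0) +
        (if a = x then q - q⁻¹ else 0)
    else
      if a = (x.2, x.1) then sgn m n x.1 x.2 else 0

/-- The q-deformed graded switch `τ` on `V ⊗ V`:
`τ(x_i ⊗ x_j) = x_j ⊗ x_i` if `i, j ≤ m`; `= q·x_j ⊗ x_i` if `j ≤ m < i`;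
`= q⁻¹·x_j ⊗ x_i` if `i ≤ m < j`; `= −x_j ⊗ x_i` if `i, j > m`. -/
def tau (m n : ℕ) :
    Matrix (Fin (m + n) × Fin (m + n)) (Fin (m + n) × Fin (m + n)) Kq :=
  fun a x =>
    if a = (x.2, x.1) then
      (if (x.1 : ℕ) < m ∧ (x.2 : ℕ) < m then 1
       else if (x.2 : ℕ) < m ∧ m ≤ (x.1 : ℕ) then q
       else if (x.1 : ℕ) < m ∧ m ≤ (x.2 : ℕ) then q⁻¹
       else -1)
    else 0

/-- The free-group generator corresponding to the classical braid generator `σ i`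
(generators of the virtual braid group on `N = M + 2` strands are indexed by `Fin (M + 1)`). -/
def sg {M : ℕ} (i : Fin (M + 1)) : FreeGroup (Fin (M + 1) ⊕ Fin (M + 1)) :=
  FreeGroup.of (Sum.inl i)

/-- The free-group generator corresponding to the virtual crossing generator `χ i`. -/
def cg {M : ℕ} (i : Fin (M + 1)) : FreeGroup (Fin (M + 1) ⊕ Fin (M + 1)) :=
  FreeGroup.of (Sum.inr i)

/-- The defining relations of the virtual braid group `VB_N` on `N = M + 2` strands:
commutation relations for `|i − j| > 1`, the braid relations `σσσ = σσσ` and `χχχ = χχχ`,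
the involutivity `χ_i² = 1`, and the mixed relation `σ_i χ_{i+1} χ_i = χ_{i+1} χ_i σ_{i+1}`. -/
def VBRels (M : ℕ) : Set (FreeGroup (Fin (M + 1) ⊕ Fin (M + 1))) :=
  {r | (∃ i j : Fin (M + 1), 1 < ((i : ℤ) - (j : ℤ)).natAbs ∧
          (r = sg i * sg j * (sg i)⁻¹ * (sg j)⁻¹ ∨
           r = cg i * cg j * (cg i)⁻¹ * (cg j)⁻¹ ∨
           r = sg i * cg j * (sg i)⁻¹ * (cg j)⁻¹)) ∨
       (∃ i j : Fin (M + 1), (j : ℕ) = (i : ℕ) + 1 ∧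
          (r = sg i * sg j * sg i * (sg j * sg i * sg j)⁻¹ ∨
           r = cg i * cg j * cg i * (cg j * cg i * cg j)⁻¹ ∨
           r = sg i * cg j * cg i * (cg j * cg i * sg j)⁻¹)) ∨
       (∃ i : Fin (M + 1), r = cg i * cg i)}

/-- The virtual braid group on `N = M + 2` strands, as a presented group. -/
abbrev VB (M : ℕ) := PresentedGroup (VBRels M)

/-- The endomorphism of `V^{⊗(M+2)}` acting by `T` on the `i`-th and `(i+1)`-st tensor factors
and by the identity on all other factors. -/
def actOn {d M : ℕ} (T : Matrix (Fin d × Fin d) (Fin d × Fin d) Kq) (i : Fin (M + 1)) :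
    Matrix (Fin (M + 2) → Fin d) (Fin (M + 2) → Fin d) Kq :=
  fun a x =>
    T (a i.castSucc, a i.succ) (x i.castSucc, x i.succ) *
      ∏ k : Fin (M + 2),
        if k = i.castSucc ∨ k = i.succ then 1 else if a k = x k then 1 else 0

set_option synthInstance.maxHeartbeats 1000000

namespace S8

lemma q_ne : q ≠ 0 := RatFunc.X_ne_zero

/-- generalized permutation-with-coefficient matrix -/
def pm {α : Type} [DecidableEq α] (σ : α → α) (c : α → Kq) : Matrix α α Kq :=
  fun a x => (if a = σ x then 1 else 0) * c x

lemma pm_mul {α : Type} [DecidableEq α] [Fintype α] (σ σ' : α → α) (c c' : α → Kq) :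
    pm σ c * pm σ' c' = pm (fun x => σ (σ' x)) (fun x => c (σ' x) * c' x) := by
  funext a x
  rw [Matrix.mul_apply, Finset.sum_eq_single (σ' x)]
  · simp [pm]
  · intro b _ hb; simp [pm, hb]
  · simp

lemma one_pm {α : Type} [DecidableEq α] : (1 : Matrix α α Kq) = pm (fun x => x) (fun _ => 1) := by
  funext a x; simp [pm, Matrix.one_apply]

lemma smul_pm {α : Type} [DecidableEq α] (r : Kq) (σ : α → α) (c : α → Kq) :
    r • pm σ c = pm σ (fun x => r * c x) := by
  funext a x; simp [pm, Matrix.smul_apply]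

variable (m n : ℕ)

def cc (x : Fin (m + n) × Fin (m + n)) : Kq :=
  if (x.1 : ℕ) = (x.2 : ℕ) then (if m ≤ (x.1 : ℕ) then -q⁻¹ else q)
  else if (x.1 : ℕ) < (x.2 : ℕ) then q - q⁻¹ else 0

def oo (x : Fin (m + n) × Fin (m + n)) : Kq :=
  if (x.1 : ℕ) = (x.2 : ℕ) then 0
  else if m ≤ (x.1 : ℕ) then (if m ≤ (x.2 : ℕ) then -1 else 1) else 1

def tc (x : Fin (m + n) × Fin (m + n)) : Kq :=
  if m ≤ (x.1 : ℕ) then (if m ≤ (x.2 : ℕ) then -1 else q)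
  else (if m ≤ (x.2 : ℕ) then q⁻¹ else 1)

lemma Rhat_decomp : Rhat m n = pm (fun x => x) (cc m n) + pm Prod.swap (oo m n) := by
  funext a x
  obtain ⟨a1, a2⟩ := a
  obtain ⟨x1, x2⟩ := x
  simp only [Rhat, pm, Matrix.add_apply, cc, oo, sgn, Prod.swap_prod_mk, Prod.mk.injEq,
    Fin.ext_iff]
  split_ifs <;> first | ring1 | (exfalso; omega)

lemma tau_decomp : tau m n = pm Prod.swap (tc m n) := by
  funext a x
  obtain ⟨x1, x2⟩ := x
  simp only [tau, pm, tc, Prod.swap_prod_mk, boole_mul]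
  split_ifs <;> first | rfl | ring1 | (exfalso; omega)


/-! coefficient identities -/

lemma tc_inv (i j : Fin (m + n)) : tc m n (j, i) * tc m n (i, j) = 1 := by
  simp only [tc]
  split_ifs <;>
    first
    | (exfalso; omega)
    | ring1
    | (have hq : q ≠ 0 := q_ne; field_simp; try ring1)

lemma hecke_d (i j : Fin (m + n)) :
    cc m n (i, j) * cc m n (i, j) + oo m n (j, i) * oo m n (i, j)
      = (q - q⁻¹) * cc m n (i, j) + 1 := by
  simp only [cc, oo]
  split_ifs <;>
    first
    | (exfalso; omega)
    | ring1
    | (have hq : q ≠ 0 := q_ne; field_simp; try ring1)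

lemma hecke_o (i j : Fin (m + n)) :
    cc m n (j, i) * oo m n (i, j) + oo m n (i, j) * cc m n (i, j)
      = (q - q⁻¹) * oo m n (i, j) := by
  simp only [cc, oo]
  split_ifs <;>
    first
    | (exfalso; omega)
    | ring1
    | (have hq : q ≠ 0 := q_ne; field_simp; try ring1)

set_option maxHeartbeats 3000000 in
lemma ybe_a (i j k : Fin (m + n)) :
    cc m n (i,j) * cc m n (j,k) * cc m n (i,j) + oo m n (j,i) * cc m n (i,k) * oo m n (i,j)
      = cc m n (j,k) * cc m n (i,j) * cc m n (j,k) + oo m n (k,j) * cc m n (i,k) * oo m n (j,k) := by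
  simp only [cc, oo]
  split_ifs <;>
    first
    | (exfalso; omega)
    | ring1
    | (have hq : q ≠ 0 := q_ne; field_simp; try ring1)

set_option maxHeartbeats 3000000 in
lemma ybe_b (i j k : Fin (m + n)) :
    cc m n (j,i) * cc m n (i,k) * oo m n (i,j) + oo m n (i,j) * cc m n (j,k) * cc m n (i,j)
      = cc m n (i,k) * oo m n (i,j) * cc m n (j,k) := by
  simp only [cc, oo]
  split_ifs <;>
    first
    | (exfalso; omega)
    | ring1
    | (have hq : q ≠ 0 := q_ne; field_simp; try ring1)

set_option maxHeartbeats 3000000 in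
lemma ybe_c (i j k : Fin (m + n)) :
    cc m n (i,k) * oo m n (j,k) * cc m n (i,j)
      = cc m n (k,j) * cc m n (i,k) * oo m n (j,k) + oo m n (j,k) * cc m n (i,j) * cc m n (j,k) := by
  simp only [cc, oo]
  split_ifs <;>
    first
    | (exfalso; omega)
    | ring1
    | (have hq : q ≠ 0 := q_ne; field_simp; try ring1)


/-! triple-level matrices -/

def LL {d : ℕ} (T : Matrix (Fin d × Fin d) (Fin d × Fin d) Kq) :
    Matrix (Fin d × Fin d × Fin d) (Fin d × Fin d × Fin d) Kq :=
  fun a x => T (a.1, a.2.1) (x.1, x.2.1) * (if a.2.2 = x.2.2 then 1 else 0)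

def RR {d : ℕ} (T : Matrix (Fin d × Fin d) (Fin d × Fin d) Kq) :
    Matrix (Fin d × Fin d × Fin d) (Fin d × Fin d × Fin d) Kq :=
  fun a x => (if a.1 = x.1 then (1 : Kq) else 0) * T (a.2.1, a.2.2) (x.2.1, x.2.2)

lemma LL_add {d : ℕ} (A B : Matrix (Fin d × Fin d) (Fin d × Fin d) Kq) :
    LL (A + B) = LL A + LL B := by
  funext a x; by_cases h : a.2.2 = x.2.2 <;> simp [LL, Matrix.add_apply, h, add_mul]

lemma RR_add {d : ℕ} (A B : Matrix (Fin d × Fin d) (Fin d × Fin d) Kq) :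
    RR (A + B) = RR A + RR B := by
  funext a x; by_cases h : a.1 = x.1 <;> simp [RR, Matrix.add_apply, h, mul_add]

lemma LL_pm {d : ℕ} (σ : Fin d × Fin d → Fin d × Fin d) (c : Fin d × Fin d → Kq) :
    LL (pm σ c) = pm (fun x => ((σ (x.1, x.2.1)).1, (σ (x.1, x.2.1)).2, x.2.2))
      (fun x => c (x.1, x.2.1)) := by
  funext a x
  obtain ⟨a1, a2, a3⟩ := a
  obtain ⟨x1, x2, x3⟩ := x
  simp only [LL, pm, Prod.mk.injEq]
  by_cases h1 : (a1, a2) = σ (x1, x2) <;> by_cases h2 : a3 = x3 <;>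
    simp_all [Prod.ext_iff] <;> tauto

lemma RR_pm {d : ℕ} (σ : Fin d × Fin d → Fin d × Fin d) (c : Fin d × Fin d → Kq) :
    RR (pm σ c) = pm (fun x => (x.1, σ (x.2.1, x.2.2)))
      (fun x => c (x.2.1, x.2.2)) := by
  funext a x
  obtain ⟨a1, a2, a3⟩ := a
  obtain ⟨x1, x2, x3⟩ := x
  simp only [RR, pm, Prod.mk.injEq]
  by_cases h1 : (a2, a3) = σ (x2, x3) <;> by_cases h2 : a1 = x1 <;>
    simp_all [Prod.ext_iff] <;> tauto

/-! the matrix identities on small tensor powers -/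

theorem hecke (m n : ℕ) :
    Rhat m n * Rhat m n = (q - q⁻¹) • Rhat m n + 1 := by
  rw [Rhat_decomp, add_mul, mul_add, mul_add, pm_mul, pm_mul, pm_mul, pm_mul, smul_add,
    smul_pm, smul_pm, one_pm (α := Fin (m + n) × Fin (m + n))]
  funext a x
  obtain ⟨a1, a2⟩ := a
  obtain ⟨x1, x2⟩ := x
  simp only [Matrix.add_apply, pm, Prod.swap_prod_mk, id_eq]
  linear_combination
    (if (a1, a2) = (x1, x2) then (1 : Kq) else 0) * hecke_d m n x1 x2 +
    (if (a1, a2) = (x2, x1) then (1 : Kq) else 0) * hecke_o m n x1 x2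

theorem tau_sq (m n : ℕ) : tau m n * tau m n = 1 := by
  rw [tau_decomp, pm_mul, one_pm (α := Fin (m + n) × Fin (m + n))]
  funext a x
  obtain ⟨x1, x2⟩ := x
  simp only [pm, Prod.swap_prod_mk, Prod.swap_swap]
  linear_combination (if a = (x1, x2) then (1 : Kq) else 0) * tc_inv m n x1 x2


set_option maxHeartbeats 1000000 in
theorem braidR (m n : ℕ) :
    LL (Rhat m n) * RR (Rhat m n) * LL (Rhat m n)
      = RR (Rhat m n) * LL (Rhat m n) * RR (Rhat m n) := by
  rw [Rhat_decomp, LL_add, RR_add, LL_pm, LL_pm, RR_pm, RR_pm]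
  simp only [add_mul, mul_add, pm_mul]
  funext a x
  obtain ⟨a1, a2, a3⟩ := a
  obtain ⟨x1, x2, x3⟩ := x
  simp only [Matrix.add_apply, pm, Prod.swap_prod_mk, id_eq]
  linear_combination
    (if (a1, a2, a3) = (x1, x2, x3) then (1 : Kq) else 0) * ybe_a m n x1 x2 x3 +
    (if (a1, a2, a3) = (x2, x1, x3) then (1 : Kq) else 0) * ybe_b m n x1 x2 x3 +
    (if (a1, a2, a3) = (x1, x3, x2) then (1 : Kq) else 0) * ybe_c m n x1 x2 x3

set_option maxHeartbeats 1000000 in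
theorem braidT (m n : ℕ) :
    LL (tau m n) * RR (tau m n) * LL (tau m n)
      = RR (tau m n) * LL (tau m n) * RR (tau m n) := by
  rw [tau_decomp, LL_pm, RR_pm]
  simp only [pm_mul]
  funext a x
  obtain ⟨a1, a2, a3⟩ := a
  obtain ⟨x1, x2, x3⟩ := x
  simp only [Matrix.add_apply, pm, Prod.swap_prod_mk, id_eq]
  ring

set_option maxHeartbeats 1000000 in
theorem braidM (m n : ℕ) :
    LL (Rhat m n) * RR (tau m n) * LL (tau m n)
      = RR (tau m n) * LL (tau m n) * RR (Rhat m n) := by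
  rw [Rhat_decomp, tau_decomp]
  simp only [LL_add, RR_add, LL_pm, RR_pm, add_mul, mul_add, pm_mul]
  funext a x
  obtain ⟨a1, a2, a3⟩ := a
  obtain ⟨x1, x2, x3⟩ := x
  simp only [Matrix.add_apply, pm, Prod.swap_prod_mk, id_eq]
  ring


/-! ## transport machinery -/

open Kronecker

/-- `T` acting on positions `c`, `s` of a tensor power indexed by `ι`. -/
def act {d : ℕ} {ι : Type} [Fintype ι] [DecidableEq ι]
    (T : Matrix (Fin d × Fin d) (Fin d × Fin d) Kq) (c s : ι) :
    Matrix (ι → Fin d) (ι → Fin d) Kq :=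
  fun a x =>
    T (a c, a s) (x c, x s) *
      ∏ k : ι, if k = c ∨ k = s then 1 else if a k = x k then 1 else 0

lemma prod_delta {d : ℕ} {ι : Type} [Fintype ι] [DecidableEq ι] (s : Finset ι)
    (a x : ι → Fin d) :
    ∏ k ∈ s, (if a k = x k then (1 : Kq) else 0) = if ∀ k ∈ s, a k = x k then 1 else 0 := by
  by_cases h : ∀ k ∈ s, a k = x k
  · rw [if_pos h]
    exact Finset.prod_eq_one fun k hk => if_pos (h k hk)
  · rw [if_neg h]
    push_neg at h
    obtain ⟨k, hk, hne⟩ := h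
    exact Finset.prod_eq_zero hk (if_neg hne)

variable {ι κ : Type} [Fintype ι] [DecidableEq ι] [Fintype κ] [DecidableEq κ]

/-- complement of the range of `w`. -/
def Compl (w : κ → ι) : Type := {k : ι // ∀ t, w t ≠ k}

instance (w : κ → ι) : Fintype (Compl w) := Subtype.fintype _
instance (w : κ → ι) : DecidableEq (Compl w) := Subtype.instDecidableEq

/-- splitting functions on `ι` into the window and its complement. -/
def funSplit {d : ℕ} (w : κ → ι) (hw : Function.Injective w) :
    (ι → Fin d) ≃ (κ → Fin d) × (Compl w → Fin d) where
  toFun a := (a ∘ w, fun k => a k.1)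
  invFun p k := if h : ∃ t, w t = k then p.1 h.choose else p.2 ⟨k, fun t ht => h ⟨t, ht⟩⟩
  left_inv a := by
    funext k
    by_cases h : ∃ t, w t = k
    · simp only [dif_pos h]
      exact congrArg a h.choose_spec
    · simp only [dif_neg h]
  right_inv p := by
    obtain ⟨f, g⟩ := p
    have e1 : ∀ t : κ, (∃ t', w t' = w t) := fun t => ⟨t, rfl⟩
    refine Prod.ext ?_ ?_
    · funext t
      simp only [Function.comp_apply, dif_pos (e1 t)]
      exact congrArg f (hw (e1 t).choose_spec)
    · funext k
      have h : ¬∃ t, w t = k.1 := fun ⟨t, ht⟩ => k.2 t ht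
      simp only [dif_neg h]
      rfl

/-- conjugated Kronecker-with-identity embedding of matrices. -/
def Phi {d : ℕ} (w : κ → ι) (hw : Function.Injective w)
    (A : Matrix (κ → Fin d) (κ → Fin d) Kq) : Matrix (ι → Fin d) (ι → Fin d) Kq :=
  (A ⊗ₖ (1 : Matrix (Compl w → Fin d) (Compl w → Fin d) Kq)).submatrix
    (funSplit w hw) (funSplit w hw)

lemma Phi_mul {d : ℕ} (w : κ → ι) (hw : Function.Injective w)
    (A B : Matrix (κ → Fin d) (κ → Fin d) Kq) :
    Phi w hw A * Phi w hw B = Phi w hw (A * B) := by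
  unfold Phi
  rw [Matrix.submatrix_mul_equiv, ← Matrix.mul_kronecker_mul, one_mul]

lemma Phi_one {d : ℕ} (w : κ → ι) (hw : Function.Injective w) :
    Phi w hw (1 : Matrix (κ → Fin d) (κ → Fin d) Kq) = 1 := by
  unfold Phi
  rw [Matrix.one_kronecker_one, Matrix.submatrix_one_equiv]

lemma act_transport {d : ℕ} (w : κ → ι) (hw : Function.Injective w) (c s : κ)
    (T : Matrix (Fin d × Fin d) (Fin d × Fin d) Kq) :
    act T (w c) (w s) = Phi w hw (act T c s) := by
  funext a x
  have key : (∏ k : ι, if k = w c ∨ k = w s then (1 : Kq) else if a k = x k then 1 else 0)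
      = (∏ t : κ, if t = c ∨ t = s then (1 : Kq) else if a (w t) = x (w t) then 1 else 0) *
        ∏ k ∈ (Finset.univ.image w)ᶜ, (if a k = x k then (1 : Kq) else 0) := by
    rw [← Finset.prod_mul_prod_compl (Finset.univ.image w)]
    congr 1
    · rw [Finset.prod_image (fun t _ t' _ h => hw h)]
      refine Finset.prod_congr rfl fun t _ => ?_
      simp [hw.eq_iff]
    · refine Finset.prod_congr rfl fun k hk => ?_
      simp only [Finset.mem_compl, Finset.mem_image, Finset.mem_univ, true_and, not_exists] at hk
      rw [if_neg]
      push_neg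
      exact ⟨fun h => hk c h.symm, fun h => hk s h.symm⟩
  have hmem : ∀ k : ι, k ∈ (Finset.univ.image w)ᶜ ↔ ∀ t, w t ≠ k := by
    intro k
    simp [Finset.mem_compl, Finset.mem_image]
  have key2 : (∏ k ∈ (Finset.univ.image w)ᶜ, (if a k = x k then (1 : Kq) else 0))
      = if (fun k : Compl w => a k.1) = (fun k : Compl w => x k.1) then 1 else 0 := by
    rw [prod_delta]
    congr 1
    refine propext ⟨fun h => ?_, fun h => ?_⟩
    · funext k
      exact h k.1 ((hmem k.1).2 k.2)
    · intro k hk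
      exact congrFun h ⟨k, (hmem k).1 hk⟩
  show T (a (w c), a (w s)) (x (w c), x (w s)) * _ = _
  rw [key, key2]
  show _ = (act T c s ⊗ₖ (1 : Matrix (Compl w → Fin d) (Compl w → Fin d) Kq))
    (funSplit w hw a) (funSplit w hw x)
  rw [Matrix.kroneckerMap_apply]
  show _ = act T c s (a ∘ w) (x ∘ w) * (1 : Matrix (Compl w → Fin d) (Compl w → Fin d) Kq)
    (fun k => a k.1) (fun k => x k.1)
  rw [Matrix.one_apply, act]
  simp only [Function.comp_apply]
  ring


/-! ## small windows -/

def LL4 {d : ℕ} (T : Matrix (Fin d × Fin d) (Fin d × Fin d) Kq) :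
    Matrix (Fin d × Fin d × Fin d × Fin d) (Fin d × Fin d × Fin d × Fin d) Kq :=
  fun a x => T (a.1, a.2.1) (x.1, x.2.1) *
    ((if a.2.2.1 = x.2.2.1 then (1 : Kq) else 0) * (if a.2.2.2 = x.2.2.2 then (1 : Kq) else 0))

def RR4 {d : ℕ} (T : Matrix (Fin d × Fin d) (Fin d × Fin d) Kq) :
    Matrix (Fin d × Fin d × Fin d × Fin d) (Fin d × Fin d × Fin d × Fin d) Kq :=
  fun a x => ((if a.1 = x.1 then (1 : Kq) else 0) * (if a.2.1 = x.2.1 then (1 : Kq) else 0)) *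
    T (a.2.2.1, a.2.2.2) (x.2.2.1, x.2.2.2)

def e2 {d : ℕ} : (Fin 2 → Fin d) ≃ Fin d × Fin d where
  toFun f := (f 0, f 1)
  invFun p := ![p.1, p.2]
  left_inv f := by funext k; fin_cases k <;> rfl
  right_inv p := rfl

def e3 {d : ℕ} : (Fin 3 → Fin d) ≃ Fin d × Fin d × Fin d where
  toFun f := (f 0, f 1, f 2)
  invFun p := ![p.1, p.2.1, p.2.2]
  left_inv f := by funext k; fin_cases k <;> rfl
  right_inv p := rfl

def e4 {d : ℕ} : (Fin 4 → Fin d) ≃ Fin d × Fin d × Fin d × Fin d where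
  toFun f := (f 0, f 1, f 2, f 3)
  invFun p := ![p.1, p.2.1, p.2.2.1, p.2.2.2]
  left_inv f := by funext k; fin_cases k <;> rfl
  right_inv p := rfl

lemma act2_eq {d : ℕ} (T : Matrix (Fin d × Fin d) (Fin d × Fin d) Kq) :
    act T (0 : Fin 2) 1 = T.submatrix e2 e2 := by
  funext a x
  simp (config := { decide := true }) only [act, Matrix.submatrix_apply, e2,
    Equiv.coe_fn_mk, Fin.prod_univ_two, if_true, if_false, mul_one, one_mul]
  rfl

lemma act3_01 {d : ℕ} (T : Matrix (Fin d × Fin d) (Fin d × Fin d) Kq) :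
    act T (0 : Fin 3) 1 = (LL T).submatrix e3 e3 := by
  funext a x
  simp (config := { decide := true }) only [act, LL, Matrix.submatrix_apply, e3,
    Equiv.coe_fn_mk, Fin.prod_univ_three, if_true, if_false, mul_one, one_mul]
  rfl

lemma act3_12 {d : ℕ} (T : Matrix (Fin d × Fin d) (Fin d × Fin d) Kq) :
    act T (1 : Fin 3) 2 = (RR T).submatrix e3 e3 := by
  funext a x
  simp (config := { decide := true }) only [act, RR, Matrix.submatrix_apply, e3,
    Equiv.coe_fn_mk, Fin.prod_univ_three, if_true, if_false, mul_one, one_mul]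
  exact mul_comm _ _

lemma act4_01 {d : ℕ} (T : Matrix (Fin d × Fin d) (Fin d × Fin d) Kq) :
    act T (0 : Fin 4) 1 = (LL4 T).submatrix e4 e4 := by
  funext a x
  simp (config := { decide := true }) only [act, LL4, Matrix.submatrix_apply, e4,
    Equiv.coe_fn_mk, Fin.prod_univ_four, if_true, if_false, mul_one, one_mul]
  rfl

lemma act4_23 {d : ℕ} (T : Matrix (Fin d × Fin d) (Fin d × Fin d) Kq) :
    act T (2 : Fin 4) 3 = (RR4 T).submatrix e4 e4 := by
  funext a x
  simp (config := { decide := true }) only [act, RR4, Matrix.submatrix_apply, e4,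
    Equiv.coe_fn_mk, Fin.prod_univ_four, if_true, if_false, mul_one, one_mul]
  exact mul_comm _ _


lemma LL4_mul_RR4 {d : ℕ} (T S : Matrix (Fin d × Fin d) (Fin d × Fin d) Kq)
    (a x : Fin d × Fin d × Fin d × Fin d) :
    (LL4 T * RR4 S) a x
      = T (a.1, a.2.1) (x.1, x.2.1) * S (a.2.2.1, a.2.2.2) (x.2.2.1, x.2.2.2) := by
  rw [Matrix.mul_apply, Finset.sum_eq_single (x.1, x.2.1, a.2.2.1, a.2.2.2)]
  · simp only [LL4, RR4, if_pos rfl, if_true, mul_one, one_mul]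
    try ring1
  · intro b _ hb
    obtain ⟨b1, b2, b3, b4⟩ := b
    simp only [ne_eq, Prod.mk.injEq, not_and] at hb
    simp only [LL4, RR4]
    by_cases h1 : b1 = x.1 <;> by_cases h2 : b2 = x.2.1 <;>
      by_cases h3 : a.2.2.1 = b3 <;> by_cases h4 : a.2.2.2 = b4 <;>
      simp_all <;> first | ring1 | (exfalso; exact hb h3.symm h4.symm)
  · intro h
    exact absurd (Finset.mem_univ _) h

lemma RR4_mul_LL4 {d : ℕ} (T S : Matrix (Fin d × Fin d) (Fin d × Fin d) Kq)
    (a x : Fin d × Fin d × Fin d × Fin d) :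
    (RR4 S * LL4 T) a x
      = T (a.1, a.2.1) (x.1, x.2.1) * S (a.2.2.1, a.2.2.2) (x.2.2.1, x.2.2.2) := by
  rw [Matrix.mul_apply, Finset.sum_eq_single (a.1, a.2.1, x.2.2.1, x.2.2.2)]
  · simp only [LL4, RR4, if_pos rfl, if_true, mul_one, one_mul]
    try ring1
  · intro b _ hb
    obtain ⟨b1, b2, b3, b4⟩ := b
    simp only [ne_eq, Prod.mk.injEq, not_and] at hb
    simp only [LL4, RR4]
    by_cases h1 : a.1 = b1 <;> by_cases h2 : a.2.1 = b2 <;>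
      by_cases h3 : b3 = x.2.2.1 <;> by_cases h4 : b4 = x.2.2.2 <;>
      simp_all <;> first | ring1 | (exfalso; exact hb h3 h4)
  · intro h
    exact absurd (Finset.mem_univ _) h

lemma comm4 {d : ℕ} (T S : Matrix (Fin d × Fin d) (Fin d × Fin d) Kq) :
    LL4 T * RR4 S = RR4 S * LL4 T := by
  funext a x
  rw [LL4_mul_RR4, RR4_mul_LL4]


/-! ## act-level relations on an arbitrary index type -/

lemma act_mul {d : ℕ} {c s : ι} (h : c ≠ s)
    (T S : Matrix (Fin d × Fin d) (Fin d × Fin d) Kq) :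
    act T c s * act S c s = act (T * S) c s := by
  have hw : Function.Injective (![c, s] : Fin 2 → ι) := by
    intro u v huv
    fin_cases u <;> fin_cases v <;> simp_all
  rw [show act T c s = Phi ![c, s] hw (act T (0 : Fin 2) 1) from act_transport ![c, s] hw 0 1 T,
    show act S c s = Phi ![c, s] hw (act S (0 : Fin 2) 1) from act_transport ![c, s] hw 0 1 S,
    show act (T * S) c s = Phi ![c, s] hw (act (T * S) (0 : Fin 2) 1) from
      act_transport ![c, s] hw 0 1 (T * S),
    Phi_mul, act2_eq, act2_eq, act2_eq, Matrix.submatrix_mul_equiv]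

lemma act_one {d : ℕ} {c s : ι} (h : c ≠ s) :
    act (1 : Matrix (Fin d × Fin d) (Fin d × Fin d) Kq) c s = 1 := by
  have hw : Function.Injective (![c, s] : Fin 2 → ι) := by
    intro u v huv
    fin_cases u <;> fin_cases v <;> simp_all
  rw [show act (1 : Matrix (Fin d × Fin d) (Fin d × Fin d) Kq) c s
      = Phi ![c, s] hw (act 1 (0 : Fin 2) 1) from act_transport ![c, s] hw 0 1 1,
    act2_eq, Matrix.submatrix_one_equiv, Phi_one]

lemma act_comm {d : ℕ} {c s c' s' : ι} (hw : Function.Injective (![c, s, c', s'] : Fin 4 → ι))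
    (T S : Matrix (Fin d × Fin d) (Fin d × Fin d) Kq) :
    act T c s * act S c' s' = act S c' s' * act T c s := by
  rw [show act T c s = Phi ![c, s, c', s'] hw (act T (0 : Fin 4) 1) from
      act_transport ![c, s, c', s'] hw 0 1 T,
    show act S c' s' = Phi ![c, s, c', s'] hw (act S (2 : Fin 4) 3) from
      act_transport ![c, s, c', s'] hw 2 3 S,
    Phi_mul, Phi_mul, act4_01, act4_23, Matrix.submatrix_mul_equiv,
    Matrix.submatrix_mul_equiv, comm4]

lemma act_braid {d : ℕ} {c s u : ι} (hw : Function.Injective (![c, s, u] : Fin 3 → ι))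
    {A B C D E F : Matrix (Fin d × Fin d) (Fin d × Fin d) Kq}
    (h : LL A * RR B * LL C = RR D * LL E * RR F) :
    act A c s * act B s u * act C c s = act D s u * act E c s * act F s u := by
  rw [show act A c s = Phi ![c, s, u] hw (act A (0 : Fin 3) 1) from
      act_transport ![c, s, u] hw 0 1 A,
    show act B s u = Phi ![c, s, u] hw (act B (1 : Fin 3) 2) from
      act_transport ![c, s, u] hw 1 2 B,
    show act C c s = Phi ![c, s, u] hw (act C (0 : Fin 3) 1) from
      act_transport ![c, s, u] hw 0 1 C,
    show act D s u = Phi ![c, s, u] hw (act D (1 : Fin 3) 2) from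
      act_transport ![c, s, u] hw 1 2 D,
    show act E c s = Phi ![c, s, u] hw (act E (0 : Fin 3) 1) from
      act_transport ![c, s, u] hw 0 1 E,
    show act F s u = Phi ![c, s, u] hw (act F (1 : Fin 3) 2) from
      act_transport ![c, s, u] hw 1 2 F,
    Phi_mul, Phi_mul, Phi_mul, Phi_mul, act3_01, act3_01, act3_01, act3_12, act3_12, act3_12,
    Matrix.submatrix_mul_equiv, Matrix.submatrix_mul_equiv, Matrix.submatrix_mul_equiv,
    Matrix.submatrix_mul_equiv, h]


/-! ## assembly -/

lemma comm_rel {G : Type} [Group G] {a b : G} (h : a * b = b * a) :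
    a * b * a⁻¹ * b⁻¹ = 1 := by rw [h]; group

lemma braid_rel {G : Type} [Group G] {a b c d e f : G} (h : a * b * c = d * e * f) :
    a * b * c * (d * e * f)⁻¹ = 1 := by rw [h]; group

variable (M : ℕ)

lemma actOn_eq (T : Matrix (Fin (m + n) × Fin (m + n)) (Fin (m + n) × Fin (m + n)) Kq)
    (i : Fin (M + 1)) : actOn (M := M) T i = act T i.castSucc i.succ := rfl

lemma cs_ne (i : Fin (M + 1)) : (i.castSucc : Fin (M + 2)) ≠ i.succ :=
  (Fin.castSucc_lt_succ : i.castSucc < i.succ).ne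

lemma actOn_mul (T S : Matrix (Fin (m + n) × Fin (m + n)) (Fin (m + n) × Fin (m + n)) Kq)
    (i : Fin (M + 1)) : actOn (M := M) T i * actOn S i = actOn (T * S) i := by
  rw [actOn_eq, actOn_eq, actOn_eq]
  exact act_mul (cs_ne M i) T S

lemma actOn_one (i : Fin (M + 1)) :
    actOn (M := M) (1 : Matrix (Fin (m + n) × Fin (m + n)) (Fin (m + n) × Fin (m + n)) Kq) i
      = 1 := by
  rw [actOn_eq]
  exact act_one (cs_ne M i)

def Rinv : Matrix (Fin (m + n) × Fin (m + n)) (Fin (m + n) × Fin (m + n)) Kq :=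
  Rhat m n - (q - q⁻¹) • 1

lemma Rhat_Rinv : Rhat m n * Rinv m n = 1 := by
  unfold Rinv
  rw [mul_sub, Matrix.mul_smul, mul_one, hecke]
  exact add_sub_cancel_left _ _

lemma Rinv_Rhat : Rinv m n * Rhat m n = 1 := by
  unfold Rinv
  rw [sub_mul, Matrix.smul_mul, one_mul, hecke]
  exact add_sub_cancel_left _ _

def sigU (i : Fin (M + 1)) :
    (Matrix (Fin (M + 2) → Fin (m + n)) (Fin (M + 2) → Fin (m + n)) Kq)ˣ where
  val := actOn (Rhat m n) i
  inv := actOn (Rinv m n) i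
  val_inv := by rw [actOn_mul, Rhat_Rinv, actOn_one]
  inv_val := by rw [actOn_mul, Rinv_Rhat, actOn_one]

def chiU (i : Fin (M + 1)) :
    (Matrix (Fin (M + 2) → Fin (m + n)) (Fin (M + 2) → Fin (m + n)) Kq)ˣ where
  val := actOn (tau m n) i
  inv := actOn (tau m n) i
  val_inv := by rw [actOn_mul, tau_sq, actOn_one]
  inv_val := by rw [actOn_mul, tau_sq, actOn_one]

def gens : Fin (M + 1) ⊕ Fin (M + 1) →
    (Matrix (Fin (M + 2) → Fin (m + n)) (Fin (M + 2) → Fin (m + n)) Kq)ˣ :=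
  Sum.elim (sigU m n M) (chiU m n M)

lemma inj4 {i j : Fin (M + 1)} (hij : 1 < ((i : ℤ) - (j : ℤ)).natAbs) :
    Function.Injective
      (![i.castSucc, i.succ, j.castSucc, j.succ] : Fin 4 → Fin (M + 2)) := by
  have h : (i : ℕ) + 2 ≤ (j : ℕ) ∨ (j : ℕ) + 2 ≤ (i : ℕ) := by omega
  intro u v huv
  fin_cases u <;> fin_cases v <;> (try simp [Fin.ext_iff] at huv) <;>
    first | rfl | (exfalso; omega)

lemma inj3 {i j : Fin (M + 1)} (hj : (j : ℕ) = (i : ℕ) + 1) :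
    Function.Injective (![i.castSucc, i.succ, j.succ] : Fin 3 → Fin (M + 2)) := by
  intro u v huv
  fin_cases u <;> fin_cases v <;> (try simp [Fin.ext_iff] at huv) <;>
    first | rfl | (exfalso; omega)

lemma jcast {i j : Fin (M + 1)} (hj : (j : ℕ) = (i : ℕ) + 1) :
    (j.castSucc : Fin (M + 2)) = i.succ := by
  apply Fin.ext
  simp [hj]

lemma mat_comm {i j : Fin (M + 1)} (hij : 1 < ((i : ℤ) - (j : ℤ)).natAbs)
    (T S : Matrix (Fin (m + n) × Fin (m + n)) (Fin (m + n) × Fin (m + n)) Kq) :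
    actOn (M := M) T i * actOn S j = actOn S j * actOn T i := by
  rw [actOn_eq, actOn_eq]
  exact act_comm (inj4 M hij) T S

lemma mat_braid {i j : Fin (M + 1)} (hj : (j : ℕ) = (i : ℕ) + 1)
    {A B C D E F : Matrix (Fin (m + n) × Fin (m + n)) (Fin (m + n) × Fin (m + n)) Kq}
    (h : LL A * RR B * LL C = RR D * LL E * RR F) :
    actOn (M := M) A i * actOn B j * actOn C i = actOn D j * actOn E i * actOn F j := by
  rw [actOn_eq, actOn_eq, actOn_eq, actOn_eq, actOn_eq, actOn_eq, jcast M hj]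
  exact act_braid (inj3 M hj) h

lemma rels_hold : ∀ r ∈ VBRels M, FreeGroup.lift (gens m n M) r = 1 := by
  rintro r (⟨i, j, hij, rfl | rfl | rfl⟩ | ⟨i, j, hj, rfl | rfl | rfl⟩ | ⟨i, rfl⟩) <;>
    simp only [map_mul, map_inv, sg, cg, FreeGroup.lift_apply_of, gens, Sum.elim_inl, Sum.elim_inr]
  · exact comm_rel (Units.ext (by
      simp only [Units.val_mul, sigU]
      exact mat_comm m n M hij _ _))
  · exact comm_rel (Units.ext (by
      simp only [Units.val_mul, chiU]
      exact mat_comm m n M hij _ _))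
  · exact comm_rel (Units.ext (by
      simp only [Units.val_mul, sigU, chiU]
      exact mat_comm m n M hij _ _))
  · exact braid_rel (Units.ext (by
      simp only [Units.val_mul, sigU]
      exact mat_braid m n M hj (braidR m n)))
  · exact braid_rel (Units.ext (by
      simp only [Units.val_mul, chiU]
      exact mat_braid m n M hj (braidT m n)))
  · exact braid_rel (Units.ext (by
      simp only [Units.val_mul, sigU, chiU]
      exact mat_braid m n M hj (braidM m n)))
  · exact Units.ext (by
      simp only [Units.val_mul, chiU, Units.val_one]
      rw [actOn_mul, tau_sq, actOn_one])

end S8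


/-- the virtual `U_q(gl(m|n))` Reshetikhin–Turaev braid representation exists and
is unique. -/
theorem statement8 (m n M : ℕ) (hmn : 1 ≤ m + n) :
    ∃! φ : VB M →* (Matrix (Fin (M + 2) → Fin (m + n)) (Fin (M + 2) → Fin (m + n)) Kq)ˣ,
      ∀ i : Fin (M + 1),
        (φ (PresentedGroup.of (Sum.inl i))).val = actOn (Rhat m n) i ∧
        (φ (PresentedGroup.of (Sum.inr i))).val = actOn (tau m n) i := by
  refine ⟨PresentedGroup.toGroup (S8.rels_hold m n M), fun i => ?_, fun ψ hψ => ?_⟩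
  · constructor
    · rw [PresentedGroup.toGroup.of]
      rfl
    · rw [PresentedGroup.toGroup.of]
      rfl
  · refine MonoidHom.ext fun x => ?_
    refine PresentedGroup.toGroup.unique (S8.rels_hold m n M) ψ (fun y => ?_)
    rcases y with i | i
    · exact Units.ext ((hψ i).1)
    · exact Units.ext ((hψ i).2)

end
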